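/- arXiv:1703.05265 — 4 statements merged into one kernel-verified Lean document; each statement's English description precedes it below -/
import Mathlib

section
/- Let (·,·): F* × F* → A be a bilinear Steinberg symbol, and let s, t in F* satisfy s·t·(1-s·t) ≠ 0. Then (1-st, t) = (1-st, t - s⁻¹). -/
theorem steinberg_symbol_shift {F A : Type*} [Field F] [CommGroup A] (c : F → F → A)
    (hmul_right : ∀ x y z : F, x ≠ 0 → y ≠ 0 → z ≠ 0 → c x (y * z) = c x y * c x z)
    (hmul_left : ∀ x y z : F, x ≠ 0 → y ≠ 0 → z ≠ 0 → c (x * y) z = c x z * c y z)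
    (hstein : ∀ x : F, x ≠ 0 → x ≠ 1 → c x (1 - x) = 1) :
    ∀ s t : F, s * t * (1 - s * t) ≠ 0 → c (1 - s * t) t = c (1 - s * t) (t - s⁻¹) := by
  have hone : ∀ y : F, y ≠ 0 → c 1 y = 1 := by
    intro y hy
    have h := hmul_left 1 1 y one_ne_zero one_ne_zero hy
    rw [one_mul] at h
    exact left_eq_mul.mp h
  have hone' : ∀ y : F, y ≠ 0 → c y 1 = 1 := by
    intro y hy
    have h := hmul_right y 1 1 hy one_ne_zero one_ne_zero
    rw [one_mul] at h
    exact left_eq_mul.mp h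
  have hinvl : ∀ x y : F, x ≠ 0 → y ≠ 0 → c x⁻¹ y = (c x y)⁻¹ := by
    intro x y hx hy
    have h := hmul_left x x⁻¹ y hx (inv_ne_zero hx) hy
    rw [mul_inv_cancel₀ hx, hone y hy] at h
    exact (inv_eq_of_mul_eq_one_right h.symm).symm
  have hinvr : ∀ x y : F, x ≠ 0 → y ≠ 0 → c x y⁻¹ = (c x y)⁻¹ := by
    intro x y hx hy
    have h := hmul_right x y y⁻¹ hx hy (inv_ne_zero hy)
    rw [mul_inv_cancel₀ hy, hone' x hx] at h
    exact (inv_eq_of_mul_eq_one_right h.symm).symm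
  have hneg : ∀ x : F, x ≠ 0 → x ≠ 1 → c x (-x) = 1 := by
    intro x hx hx1
    have h1x : (1 : F) - x ≠ 0 := sub_ne_zero.mpr (Ne.symm hx1)
    have hxi1 : x⁻¹ ≠ 1 := by
      intro h; exact hx1 (by rw [← inv_inv x, h, inv_one])
    have h1xi : (1 : F) - x⁻¹ ≠ 0 := sub_ne_zero.mpr (Ne.symm hxi1)
    have key' : -x * (1 - x⁻¹) = 1 - x := by
      field_simp
      ring
    have key : -x = (1 - x) * (1 - x⁻¹)⁻¹ :=
      (eq_mul_inv_iff_mul_eq₀ h1xi).mpr key'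
    rw [key, hmul_right x (1 - x) (1 - x⁻¹)⁻¹ hx h1x (inv_ne_zero h1xi),
      hstein x hx hx1, hinvr x (1 - x⁻¹) hx h1xi, ← hinvl x (1 - x⁻¹) hx h1xi,
      hstein x⁻¹ (inv_ne_zero hx) hxi1]
    simp
  intro s t h
  have hs : s ≠ 0 := fun h0 => h (by rw [h0]; simp)
  have ht : t ≠ 0 := fun h0 => h (by rw [h0]; simp)
  have hst : s * t ≠ 0 := mul_ne_zero hs ht
  have hx : (1 : F) - s * t ≠ 0 := by
    intro h0; exact h (by rw [h0, mul_zero])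
  have hx1 : (1 : F) - s * t ≠ 1 := by
    intro h0; exact hst (by linear_combination -h0)
  have hnx : -(1 - s * t) ≠ 0 := neg_ne_zero.mpr hx
  have key : t - s⁻¹ = t * (-(1 - s * t) * (s * t)⁻¹) := by
    field_simp
    ring
  have hst' : c (1 - s * t) (s * t) = 1 := by
    have h2 := hstein (1 - s * t) hx hx1
    simpa using h2
  rw [key, hmul_right _ t _ hx ht (mul_ne_zero hnx (inv_ne_zero hst)),
    hmul_right _ _ _ hx hnx (inv_ne_zero hst),
    hneg _ hx hx1, hinvr _ _ hx hst, hst']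
  simp
end

section
/- Define polynomials f_k(X), g_k(X) in ℤ[X] by f₀(X)=1, g₀(X)=0, g_{k+1}(X) = f_k(X) - g_k(X), and f_{k+1}(X) = X·g_{k+1}(X) - f_k(X). Then for all k ≥ 1, g_k(X) = Σ_{i=0}^{k-1} (-1)^i · C(2k-1-i, i) · X^{k-1-i} and f_k(X) = Σ_{j=0}^{k} (-1)^j · C(2k-j, j) · X^{k-j}, where C(n,m) denotes the binomial coefficient. -/
open Polynomial Finset in
lemma gsum_step (k : ℕ) :
    (∑ i ∈ Finset.range (k + 1),
        C ((-1 : ℤ) ^ i * (Nat.choose (2 * (k + 1) - 1 - i) i : ℤ)) * X ^ ((k + 1) - 1 - i))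
      = (∑ j ∈ Finset.range (k + 1),
          C ((-1 : ℤ) ^ j * (Nat.choose (2 * k - j) j : ℤ)) * X ^ (k - j))
        - ∑ i ∈ Finset.range k,
            C ((-1 : ℤ) ^ i * (Nat.choose (2 * k - 1 - i) i : ℤ)) * X ^ (k - 1 - i) := by
  have h : (∑ j ∈ Finset.range (k + 1),
          C ((-1 : ℤ) ^ j * (Nat.choose (2 * k - j) j : ℤ)) * X ^ (k - j))
        - (∑ i ∈ Finset.range (k + 1),
        C ((-1 : ℤ) ^ i * (Nat.choose (2 * (k + 1) - 1 - i) i : ℤ)) * X ^ ((k + 1) - 1 - i))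
      = ∑ i ∈ Finset.range k,
            C ((-1 : ℤ) ^ i * (Nat.choose (2 * k - 1 - i) i : ℤ)) * X ^ (k - 1 - i) := by
    rw [← Finset.sum_sub_distrib]
    have key : ∀ i ∈ Finset.range (k + 1),
        C ((-1 : ℤ) ^ i * (Nat.choose (2 * k - i) i : ℤ)) * X ^ (k - i)
          - C ((-1 : ℤ) ^ i * (Nat.choose (2 * (k + 1) - 1 - i) i : ℤ)) * X ^ ((k + 1) - 1 - i)
        = (if i = 0 then 0 else
            C ((-1 : ℤ) ^ (i - 1) * (Nat.choose (2 * k - 1 - (i - 1)) (i - 1) : ℤ))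
              * X ^ (k - 1 - (i - 1))) := by
      intro i hi
      simp only [Finset.mem_range] at hi
      rcases i with _ | i
      · have e1 : 2 * (k + 1) - 1 - 0 = 2 * k + 1 := by omega
        have e2 : 2 * k - 0 = 2 * k := by omega
        have e3 : (k + 1) - 1 - 0 = k - 0 := by omega
        rw [e1, e2, e3]
        simp
      · have hik : i < k := by omega
        simp only [Nat.add_sub_cancel, if_neg (Nat.succ_ne_zero i)]
        have e1 : 2 * (k + 1) - 1 - (i + 1) = (2 * k - 1 - i) + 1 := by omega
        have e2 : 2 * k - (i + 1) = 2 * k - 1 - i := by omega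
        have e4 : k - (i + 1) = k - 1 - i := by omega
        rw [e1, e2, e4, Nat.choose_succ_succ]
        push_cast
        simp only [Nat.succ_eq_add_one, map_mul, map_add, map_pow, map_neg, map_one, map_natCast]
        ring
    rw [Finset.sum_congr rfl key, Finset.sum_range_succ']
    simp
  rw [eq_sub_iff_add_eq, ← h]
  ring

open Polynomial Finset in
lemma fsum_step (k : ℕ) :
    (∑ j ∈ Finset.range ((k + 1) + 1),
        C ((-1 : ℤ) ^ j * (Nat.choose (2 * (k + 1) - j) j : ℤ)) * X ^ ((k + 1) - j))
      = X * (∑ i ∈ Finset.range (k + 1),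
          C ((-1 : ℤ) ^ i * (Nat.choose (2 * (k + 1) - 1 - i) i : ℤ)) * X ^ ((k + 1) - 1 - i))
        - ∑ j ∈ Finset.range (k + 1),
            C ((-1 : ℤ) ^ j * (Nat.choose (2 * k - j) j : ℤ)) * X ^ (k - j) := by
  have hX : X * (∑ i ∈ Finset.range (k + 1),
          C ((-1 : ℤ) ^ i * (Nat.choose (2 * (k + 1) - 1 - i) i : ℤ)) * X ^ ((k + 1) - 1 - i))
      = ∑ i ∈ Finset.range (k + 1),
          C ((-1 : ℤ) ^ i * (Nat.choose (2 * (k + 1) - 1 - i) i : ℤ)) * X ^ ((k + 1) - i) := by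
    rw [Finset.mul_sum]
    refine Finset.sum_congr rfl ?_
    intro i hi
    simp only [Finset.mem_range] at hi
    have e : (k + 1) - i = ((k + 1) - 1 - i) + 1 := by omega
    rw [e, pow_succ]
    ring
  rw [hX]
  have h : ((∑ i ∈ Finset.range (k + 1),
          C ((-1 : ℤ) ^ i * (Nat.choose (2 * (k + 1) - 1 - i) i : ℤ)) * X ^ ((k + 1) - i)))
      - (∑ j ∈ Finset.range ((k + 1) + 1),
        C ((-1 : ℤ) ^ j * (Nat.choose (2 * (k + 1) - j) j : ℤ)) * X ^ ((k + 1) - j))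
      = ∑ j ∈ Finset.range (k + 1),
            C ((-1 : ℤ) ^ j * (Nat.choose (2 * k - j) j : ℤ)) * X ^ (k - j) := by
    rw [Finset.sum_range_succ (n := k + 1), sub_add_eq_sub_sub, ← Finset.sum_sub_distrib]
    have key : ∀ i ∈ Finset.range (k + 1),
        C ((-1 : ℤ) ^ i * (Nat.choose (2 * (k + 1) - 1 - i) i : ℤ)) * X ^ ((k + 1) - i)
          - C ((-1 : ℤ) ^ i * (Nat.choose (2 * (k + 1) - i) i : ℤ)) * X ^ ((k + 1) - i)
        = (if i = 0 then 0 else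
            C ((-1 : ℤ) ^ (i - 1) * (Nat.choose (2 * k - (i - 1)) (i - 1) : ℤ))
              * X ^ (k - (i - 1))) := by
      intro i hi
      simp only [Finset.mem_range] at hi
      rcases i with _ | i
      · simp
      · have hik : i < k + 1 := by omega
        simp only [Nat.add_sub_cancel, if_neg (Nat.succ_ne_zero i)]
        have e1 : 2 * (k + 1) - (i + 1) = (2 * k - i) + 1 := by omega
        have e2 : 2 * (k + 1) - 1 - (i + 1) = 2 * k - i := by omega
        have e3 : (k + 1) - (i + 1) = k - i := by omega
        rw [e1, e2, e3, Nat.choose_succ_succ]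
        push_cast
        simp only [Nat.succ_eq_add_one, map_mul, map_add, map_pow, map_neg, map_one, map_natCast]
        ring
    rw [Finset.sum_congr rfl key, Finset.sum_range_succ']
    rw [Finset.sum_range_succ (n := k)]
    have eK : 2 * (k + 1) - (k + 1) = k + 1 := by omega
    have eK2 : (k + 1) - (k + 1) = 0 := by omega
    rw [eK, eK2, Nat.choose_self]
    have eK3 : 2 * k - k = k := by omega
    have eK4 : k - k = 0 := by omega
    rw [eK3, eK4, Nat.choose_self]
    simp only [if_neg]
    push_cast
    simp only [map_mul, map_pow, map_neg, map_one, map_natCast]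
    ring
  rw [eq_sub_iff_add_eq, ← h]
  ring

open Polynomial in
/-- Closed formulas for the polynomials `f_k, g_k ∈ ℤ[X]` defined by the recursion
`f₀ = 1`, `g₀ = 0`, `g_{k+1} = f_k - g_k`, `f_{k+1} = X·g_{k+1} - f_k`. -/
theorem fg_polynomials_closed_form (f g : ℕ → Polynomial ℤ)
    (hf0 : f 0 = 1) (hg0 : g 0 = 0)
    (hg : ∀ k, g (k + 1) = f k - g k)
    (hf : ∀ k, f (k + 1) = X * g (k + 1) - f k) :
    ∀ k : ℕ, 1 ≤ k →
      g k = ∑ i ∈ Finset.range k,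
          C ((-1 : ℤ) ^ i * (Nat.choose (2 * k - 1 - i) i : ℤ)) * X ^ (k - 1 - i) ∧
      f k = ∑ j ∈ Finset.range (k + 1),
          C ((-1 : ℤ) ^ j * (Nat.choose (2 * k - j) j : ℤ)) * X ^ (k - j) := by
  have main : ∀ k : ℕ,
      g k = (∑ i ∈ Finset.range k,
          C ((-1 : ℤ) ^ i * (Nat.choose (2 * k - 1 - i) i : ℤ)) * X ^ (k - 1 - i)) ∧
      f k = ∑ j ∈ Finset.range (k + 1),
          C ((-1 : ℤ) ^ j * (Nat.choose (2 * k - j) j : ℤ)) * X ^ (k - j) := by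
    intro k
    induction k with
    | zero =>
      constructor
      · simpa using hg0
      · simpa using hf0
    | succ k ih =>
      obtain ⟨ihg, ihf⟩ := ih
      have hg' : g (k + 1) = ∑ i ∈ Finset.range (k + 1),
          C ((-1 : ℤ) ^ i * (Nat.choose (2 * (k + 1) - 1 - i) i : ℤ)) * X ^ ((k + 1) - 1 - i) := by
        rw [hg k, ihg, ihf, gsum_step]
      refine ⟨hg', ?_⟩
      rw [hf k, hg', ihf, fsum_step]
  intro k _
  exact main k
end

section
/- Let (Q, n) be a metaplectic structure on a root datum with generalized Cartan matrix A = (a_{ij}), and set n_i = n/gcd(n, Q(aᵢ∨)). Then the matrix Ã with entries ã_{ij} = (n_i/n_j)·a_{ij} = (gcd(n,Q(aⱼ∨))/gcd(n,Q(aᵢ∨)))·a_{ij} is again a generalized Cartan matrix, i.e., ã_{ii} = 2, ã_{ij} ∈ ℤ_{≤0} for i ≠ j, and ã_{ij} = 0 iff ã_{ji} = 0. -/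
/-- Metaplectic Cartan matrix: given a generalized Cartan matrix `A = (a i j)`, a positive
`W`-invariant integral quadratic form `Q` on the coroot lattice (recorded by its values
`Q i = Q(aᵢ∨)`, invariance giving `Qᵢ·aⱼᵢ = Qⱼ·aᵢⱼ` whenever `aᵢⱼ ≠ 0`) and a positive
integer `n`, the matrix `Ã` with `ã i j = (gcd(n, Q j)/gcd(n, Q i))·a i j`
(equivalently `gcd(n, Qᵢ)·ã i j = gcd(n, Qⱼ)·a i j`, and these quotients are integers)
is again a generalized Cartan matrix: `ã i i = 2`, `ã i j ≤ 0` for `i ≠ j`, and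
`ã i j = 0 ↔ ã j i = 0`. -/
theorem metaplectic_cartan_matrix_is_GCM {I : Type*} (a : I → I → ℤ) (Q : I → ℤ)
    (n : ℕ) (hn : 0 < n)
    (ha2 : ∀ i, a i i = 2)
    (haneg : ∀ i j, i ≠ j → a i j ≤ 0)
    (hzero : ∀ i j, a i j = 0 ↔ a j i = 0)
    (hQpos : ∀ i, 0 < Q i)
    (hQ : ∀ i j, a i j ≠ 0 → Q i * a j i = Q j * a i j) :
    ∃ A' : I → I → ℤ,
      (∀ i j, (Int.gcd (n : ℤ) (Q i) : ℤ) * A' i j = (Int.gcd (n : ℤ) (Q j) : ℤ) * a i j) ∧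
      (∀ i, A' i i = 2) ∧
      (∀ i j, i ≠ j → A' i j ≤ 0) ∧
      (∀ i j, A' i j = 0 ↔ A' j i = 0) := by
  set g : I → ℤ := fun i => (Int.gcd (n : ℤ) (Q i) : ℤ) with hg
  have hgpos : ∀ i, 0 < g i := by
    intro i
    have h : Int.gcd (n : ℤ) (Q i) ≠ 0 := by
      simp [Int.gcd_eq_zero_iff]
      omega
    show (0 : ℤ) < ((Int.gcd (n : ℤ) (Q i) : ℕ) : ℤ)
    exact_mod_cast Nat.pos_of_ne_zero h
  have hgne : ∀ i, g i ≠ 0 := fun i => (hgpos i).ne'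
  -- key divisibility
  have hdvd : ∀ i j, g i ∣ g j * a i j := by
    intro i j
    by_cases h : a i j = 0
    · simp [h]
    · have h1 : g i ∣ (n : ℤ) * a i j :=
        Dvd.dvd.mul_right (Int.gcd_dvd_left _ _) _
      have h2 : g i ∣ Q j * a i j := by
        rw [← hQ i j h]
        exact Dvd.dvd.mul_right (Int.gcd_dvd_right _ _) _
      have h3 : g i ∣ (Int.gcd ((n : ℤ) * a i j) (Q j * a i j) : ℤ) := by
        have := Int.dvd_coe_gcd h1 h2
        exact_mod_cast this
      have h4 : (Int.gcd ((n : ℤ) * a i j) (Q j * a i j) : ℤ)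
          = g j * ((a i j).natAbs : ℤ) := by
        rw [Int.gcd_mul_right]
        push_cast
        ring
      rcases Int.natAbs_eq (a i j) with he | he
      · rw [h4, ← he] at h3; exact h3
      · rw [h4] at h3
        have : g j * ((a i j).natAbs : ℤ) = -(g j * a i j) := by
          conv_rhs => rw [he]
          ring
        rw [this] at h3
        exact (dvd_neg).1 h3
  refine ⟨fun i j => g j * a i j / g i, ?_, ?_, ?_, ?_⟩
  · intro i j
    exact Int.mul_ediv_cancel' (hdvd i j)
  · intro i
    show g i * a i i / g i = 2
    rw [ha2, Int.mul_ediv_cancel_left _ (hgne i)]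
  · intro i j hij
    have h1 : g j * a i j ≤ 0 :=
      mul_nonpos_of_nonneg_of_nonpos (hgpos j).le (haneg i j hij)
    have h2 : g i * (g j * a i j / g i) ≤ g i * 0 := by
      rw [Int.mul_ediv_cancel' (hdvd i j), mul_zero]; exact h1
    exact le_of_mul_le_mul_left h2 (hgpos i)
  · intro i j
    have key : ∀ i j : I, g j * a i j / g i = 0 ↔ a i j = 0 := by
      intro i j
      constructor
      · intro h
        have := Int.mul_ediv_cancel' (hdvd i j)
        rw [h, mul_zero] at this
        rcases mul_eq_zero.1 this.symm with h' | h'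
        · exact absurd h' (hgne j)
        · exact h'
      · intro h; simp [h]
    rw [key, key, hzero]
end

section
/- Let W be the Weyl group of a symmetrizable Kac-Moody root system and suppose w ∈ W satisfies w(a) = a and w(b) = ±b for both simple roots a,b of a rank-2 subsystem with f_k(z) = -f_{k-1}(z) for v = (s_a s_b)^k (as in the paper's proof): if for some k > 0 one has g_k(z) = 0 with z = mn ≠ 0 (m,n the off-diagonal Cartan entries), then (s_a s_b) has finite order in W dividing 2k, and hence z = mn ≤ 3, so the rank-2 system is of finite type (A₂, B₂ or G₂). -/
/-- The simple reflection `s_a` on the rank-2 root lattice `ℤa ⊕ ℤb` (coordinates `(p,q)`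
for `p·a + q·b`), where `m = ⟨b, a∨⟩`. -/
def sA (m : ℤ) : AddMonoid.End (ℤ × ℤ) :=
  AddMonoidHom.mk' (fun v => (-(v.1 + m * v.2), v.2)) (by
    intro x y
    simp [Prod.ext_iff]
    ring)

/-- The simple reflection `s_b` on `ℤa ⊕ ℤb`, where `n = ⟨a, b∨⟩`. -/
def sB (n : ℤ) : AddMonoid.End (ℤ × ℤ) :=
  AddMonoidHom.mk' (fun v => (v.1, -(n * v.1 + v.2))) (by
    intro x y
    simp [Prod.ext_iff]
    ring)

lemma sAsB_apply (m n : ℤ) (v : ℤ × ℤ) :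
    (sA m * sB n) v = ((m * n - 1) * v.1 + m * v.2, -(n * v.1 + v.2)) := by
  show (sA m) ((sB n) v) = _
  show (-(v.1 + m * -(n * v.1 + v.2)), -(n * v.1 + v.2)) = _
  refine Prod.ext (by dsimp; ring) (by dsimp; try ring)

/-- In the rank-2 setting with off-diagonal Cartan entries `m, n ≤ 0` and `z = m·n ≠ 0`:
if `g_k(z) = 0` for some `k > 0` (where `f, g` satisfy the standard recursion evaluated
at `z = m·n`), then `s_a s_b` has finite order dividing `2k` and `z = m·n ≤ 3`, so the
rank-2 root system is of finite type (`A₂`, `B₂` or `G₂`). -/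
theorem rank_two_finite_order_of_g_eq_zero (m n : ℤ) (hm : m ≤ 0) (hn : n ≤ 0)
    (hz : m * n ≠ 0) (f g : ℕ → ℤ)
    (hf0 : f 0 = 1) (hg0 : g 0 = 0)
    (hgrec : ∀ k, g (k + 1) = f k - g k)
    (hfrec : ∀ k, f (k + 1) = (m * n) * g (k + 1) - f k)
    (k : ℕ) (hk : 0 < k) (hgk : g k = 0) :
    (sA m * sB n) ^ (2 * k) = 1 ∧ 1 ≤ m * n ∧ m * n ≤ 3 := by
  set z : ℤ := m * n with hzdef
  -- z ≥ 1
  have hm' : m < 0 := hm.lt_of_ne (fun h => hz (by rw [hzdef, h, zero_mul]))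
  have hn' : n < 0 := hn.lt_of_ne (fun h => hz (by rw [hzdef, h, mul_zero]))
  have hz1 : 1 ≤ z := by
    have : 0 < z := mul_pos_of_neg_of_neg hm' hn'
    omega
  -- z ≤ 3: otherwise g j ≥ 1 for all j ≥ 1
  have hz3 : z ≤ 3 := by
    by_contra h
    push_neg at h
    have h4 : 4 ≤ z := by omega
    have key : ∀ j, 1 ≤ g (j + 1) ∧ 2 * g (j + 1) + 1 ≤ f (j + 1) := by
      intro j
      induction j with
      | zero =>
        have hg1 : g (0 + 1) = 1 := by rw [hgrec 0, hf0, hg0]; ring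
        have hf1 : f (0 + 1) = z - 1 := by rw [hfrec 0, hg1, hf0]; ring
        constructor <;> omega
      | succ i ih =>
        obtain ⟨ih1, ih2⟩ := ih
        have hg' := hgrec (i + 1)
        have hf' := hfrec (i + 1)
        have hgg : g (i + 1) + 1 ≤ g (i + 1 + 1) := by omega
        constructor
        · omega
        · have hfe : f (i + 1 + 1) = (z - 1) * g (i + 1 + 1) - g (i + 1) := by
            rw [hf', hg']; ring
          have hpos : (0 : ℤ) ≤ g (i + 1 + 1) := by omega
          nlinarith [mul_nonneg (by omega : (0:ℤ) ≤ z - 4) hpos]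
    rcases Nat.exists_eq_add_of_lt hk with ⟨j, hj⟩
    have := (key j).1
    rw [show j + 1 = k by omega] at this
    omega
  refine ⟨?_, hz1, hz3⟩
  -- closed formulas for (sA m * sB n)^j on the basis vectors
  have main : ∀ j : ℕ,
      ((sA m * sB n) ^ j) (1, 0) = (f j, -(n * g j)) ∧
      ((sA m * sB n) ^ j) (0, 1) = (m * g j, f j - z * g j) := by
    intro j
    induction j with
    | zero => simp [hf0, hg0]
    | succ i ih =>
      obtain ⟨ih1, ih2⟩ := ih
      have hp : (sA m * sB n) ^ (i + 1) = (sA m * sB n) * (sA m * sB n) ^ i :=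
        pow_succ' _ _
      have hg' := hgrec i
      have hf' := hfrec i
      constructor
      · rw [hp]
        show (sA m * sB n) (((sA m * sB n) ^ i) (1, 0)) = _
        rw [ih1, sAsB_apply]
        refine Prod.ext ?_ ?_ <;> dsimp <;> simp only [hf', hg', hzdef] <;> ring
      · rw [hp]
        show (sA m * sB n) (((sA m * sB n) ^ i) (0, 1)) = _
        rw [ih2, sAsB_apply]
        refine Prod.ext ?_ ?_ <;> dsimp <;> simp only [hf', hg', hzdef] <;> ring
  -- determinant invariant: f j ^ 2 - z * g j * f j + z * g j ^ 2 = 1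
  have det : ∀ j : ℕ, f j ^ 2 - z * g j * f j + z * g j ^ 2 = 1 := by
    intro j
    induction j with
    | zero => rw [hf0, hg0]; ring
    | succ i ih =>
      rw [hfrec i, hgrec i]
      linear_combination ih
  have hfk2 : f k ^ 2 = 1 := by
    have hd := det k
    rw [hgk] at hd
    linear_combination hd
  -- hence (sA m * sB n)^k acts as multiplication by f k
  have hk1 : ((sA m * sB n) ^ k) (1, 0) = (f k, 0) := by
    rw [(main k).1, hgk]; simp
  have hk2 : ((sA m * sB n) ^ k) (0, 1) = (0, f k) := by
    rw [(main k).2, hgk]; simp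
  have hsmul : ∀ v : ℤ × ℤ, ((sA m * sB n) ^ k) v = f k • v := by
    intro v
    have hv : v = v.1 • ((1 : ℤ), (0 : ℤ)) + v.2 • ((0 : ℤ), (1 : ℤ)) := by
      simp [Prod.ext_iff]
    rw [hv, map_add, map_zsmul, map_zsmul,
      hk1, hk2]
    refine Prod.ext ?_ ?_ <;> simp [smul_eq_mul] <;> ring
  apply AddMonoidHom.ext
  intro v
  have h2k : (sA m * sB n) ^ (2 * k) = (sA m * sB n) ^ k * (sA m * sB n) ^ k := by
    rw [← pow_add]; ring_nf
  rw [h2k]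
  show ((sA m * sB n) ^ k) (((sA m * sB n) ^ k) v) = v
  rw [hsmul, hsmul, smul_smul]
  have hone : f k * f k = 1 := by linear_combination hfk2
  rw [hone, one_smul]
end
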